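/- If (G,f) is a P-filtered graph and e is a deletable edge, then the morphism of persistent sets π₀(G∖e, f) → π₀(G,f) induced by the inclusion of graphs is an isomorphism (bijective at every grade r ∈ P). -/

import Mathlib

structure Grph where
  V : Type
  E : Type
  [fintV : Fintype V]
  [fintE : Fintype E]
  [decV : DecidableEq V]
  [decE : DecidableEq E]
  bnd : E → V × V

attribute [instance] Grph.fintV Grph.fintE Grph.decV Grph.decE

/-- boundary map k⟨E⟩ → k⟨V⟩, e ↦ e₁ - e₀ -/
noncomputable def Grph.d (G : Grph) (k : Type) [Field k] :
    (G.E →₀ k) →ₗ[k] (G.V →₀ k) :=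
  Finsupp.linearCombination k fun e =>
    Finsupp.single (G.bnd e).2 1 - Finsupp.single (G.bnd e).1 1

def Grph.adj (G : Grph) (v w : G.V) : Prop :=
  ∃ e, G.bnd e = (v, w) ∨ G.bnd e = (w, v)

structure FGrph (P : Type) [PartialOrder P] extends Grph where
  fV : V → P
  fE : E → P
  mono0 : ∀ e, fV (bnd e).1 ≤ fE e
  mono1 : ∀ e, fV (bnd e).2 ≤ fE e

variable {P : Type} [PartialOrder P]

/-- boundary map of the sublevel graph at grade r -/
noncomputable def FGrph.dr (G : FGrph P) (k : Type) [Field k] (r : P) :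
    ({e : G.E // G.fE e ≤ r} →₀ k) →ₗ[k] ({v : G.V // G.fV v ≤ r} →₀ k) :=
  Finsupp.linearCombination k fun e =>
    Finsupp.single ⟨(G.bnd e.1).2, le_trans (G.mono1 e.1) e.2⟩ 1 -
    Finsupp.single ⟨(G.bnd e.1).1, le_trans (G.mono0 e.1) e.2⟩ 1

noncomputable def FGrph.vmap (G : FGrph P) (k : Type) [Field k] {r s : P} (h : r ≤ s) :
    ({v : G.V // G.fV v ≤ r} →₀ k) →ₗ[k] ({v : G.V // G.fV v ≤ s} →₀ k) :=
  Finsupp.lmapDomain k k fun v => ⟨v.1, le_trans v.2 h⟩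

noncomputable def FGrph.emap (G : FGrph P) (k : Type) [Field k] {r s : P} (h : r ≤ s) :
    ({e : G.E // G.fE e ≤ r} →₀ k) →ₗ[k] ({e : G.E // G.fE e ≤ s} →₀ k) :=
  Finsupp.lmapDomain k k fun e => ⟨e.1, le_trans e.2 h⟩

lemma FGrph.dNat (G : FGrph P) (k : Type) [Field k] {r s : P} (h : r ≤ s) :
    (G.dr k s).comp (G.emap k h) = (G.vmap k h).comp (G.dr k r) := by
  apply Finsupp.lhom_ext
  intro e a
  show (G.dr k s) ((G.emap k h) (Finsupp.single e a)) =
    (G.vmap k h) ((G.dr k r) (Finsupp.single e a))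
  rw [FGrph.emap, Finsupp.lmapDomain_apply, Finsupp.mapDomain_single, FGrph.dr,
    Finsupp.linearCombination_single, FGrph.dr, Finsupp.linearCombination_single,
    map_smul, map_sub, FGrph.vmap, Finsupp.lmapDomain_apply, Finsupp.lmapDomain_apply,
    Finsupp.mapDomain_single, Finsupp.mapDomain_single]

/-- 0-dim homology of the sublevel graph at r -/
noncomputable abbrev FGrph.H0at (G : FGrph P) (k : Type) [Field k] (r : P) :=
  ({v : G.V // G.fV v ≤ r} →₀ k) ⧸ LinearMap.range (G.dr k r)

noncomputable def FGrph.H0map (G : FGrph P) (k : Type) [Field k] {r s : P} (h : r ≤ s) :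
    G.H0at k r →ₗ[k] G.H0at k s :=
  Submodule.mapQ _ _ (G.vmap k h) (by
    rintro x ⟨y, rfl⟩
    exact ⟨G.emap k h y, by
      have := LinearMap.congr_fun (G.dNat k h) y
      simpa using this⟩)

noncomputable abbrev FGrph.H1at (G : FGrph P) (k : Type) [Field k] (r : P) :=
  LinearMap.ker (G.dr k r)

noncomputable def FGrph.H1map (G : FGrph P) (k : Type) [Field k] {r s : P} (h : r ≤ s) :
    G.H1at k r →ₗ[k] G.H1at k s :=
  (G.emap k h).restrict (p := LinearMap.ker (G.dr k r)) (q := LinearMap.ker (G.dr k s))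
    (by
      intro x hx
      have := LinearMap.congr_fun (G.dNat k h) x
      simp only [LinearMap.mem_ker] at hx ⊢
      simp only [LinearMap.coe_comp, Function.comp_apply] at this
      rw [this, hx, map_zero])

def FGrph.adjAt (G : FGrph P) (r : P) (a b : G.V) : Prop :=
  ∃ e, G.fE e ≤ r ∧ (G.bnd e = (a, b) ∨ G.bnd e = (b, a))

def FGrph.connAt (G : FGrph P) (r : P) : G.V → G.V → Prop :=
  Relation.ReflTransGen (G.adjAt r)

def FGrph.pi0At (G : FGrph P) (r : P) :=
  Quot (fun a b : {v : G.V // G.fV v ≤ r} => G.adjAt r a.1 b.1)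

def FGrph.Collapsible (G : FGrph P) (e : G.E) : Prop :=
  (G.bnd e).1 ≠ (G.bnd e).2 ∧
    (G.fE e = G.fV (G.bnd e).1 ∨ G.fE e = G.fV (G.bnd e).2)

def FGrph.delete (G : FGrph P) (e : G.E) : FGrph P where
  V := G.V
  E := {d : G.E // d ≠ e}
  bnd d := G.bnd d.1
  fV := G.fV
  fE d := G.fE d.1
  mono0 d := G.mono0 d.1
  mono1 d := G.mono1 d.1

def FGrph.Deletable (G : FGrph P) (e : G.E) : Prop :=
  (G.delete e).connAt (G.fE e) (G.bnd e).1 (G.bnd e).2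

def FGrph.collapse (G : FGrph P) (e : G.E) (x y : G.V) (hxy : y ≠ x)
    (hf : G.fV y ≤ G.fV x) : FGrph P where
  V := {v : G.V // v ≠ x}
  E := {d : G.E // d ≠ e}
  bnd d :=
    (if h : (G.bnd d.1).1 = x then ⟨y, hxy⟩ else ⟨(G.bnd d.1).1, h⟩,
     if h : (G.bnd d.1).2 = x then ⟨y, hxy⟩ else ⟨(G.bnd d.1).2, h⟩)
  fV v := G.fV v.1
  fE d := G.fE d.1
  mono0 d := by
    dsimp only
    split
    · exact le_trans hf (by rw [← ‹(G.bnd d.1).1 = x›]; exact G.mono0 d.1)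
    · exact G.mono0 d.1
  mono1 d := by
    dsimp only
    split
    · exact le_trans hf (by rw [← ‹(G.bnd d.1).2 = x›]; exact G.mono1 d.1)
    · exact G.mono1 d.1


lemma FGrph.adjAt_symm (G : FGrph P) (r : P) {a b : G.V} (h : G.adjAt r a b) :
    G.adjAt r b a := by
  obtain ⟨d, hd1, hd2⟩ := h
  exact ⟨d, hd1, hd2.symm⟩

lemma FGrph.connAt_symm (G : FGrph P) (r : P) {a b : G.V} (h : G.connAt r a b) :
    G.connAt r b a := by
  induction h with
  | refl => exact Relation.ReflTransGen.refl
  | tail _ hd ih => exact Relation.ReflTransGen.head (G.adjAt_symm r hd) ih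

lemma FGrph.connAt_mono (G : FGrph P) {r s : P} (hrs : r ≤ s) {a b : G.V}
    (h : G.connAt r a b) : G.connAt s a b := by
  refine Relation.ReflTransGen.mono ?_ _ _ h
  rintro x y ⟨d, hd1, hd2⟩
  exact ⟨d, le_trans hd1 hrs, hd2⟩

lemma FGrph.connAt_quot (G : FGrph P) (r : P) {a b : G.V} (h : G.connAt r a b)
    (ha : G.fV a ≤ r) :
    ∀ hb : G.fV b ≤ r,
      Quot.mk (fun a b : {v : G.V // G.fV v ≤ r} => G.adjAt r a.1 b.1) ⟨a, ha⟩ =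
      Quot.mk _ ⟨b, hb⟩ := by
  induction h with
  | refl => intro hb; rfl
  | @tail c b _ hd ih =>
    intro hb
    have hc : G.fV c ≤ r := by
      obtain ⟨d, hd1, hd2 | hd2⟩ := hd
      · have := G.mono0 d; rw [hd2] at this; exact le_trans this hd1
      · have := G.mono1 d; rw [hd2] at this; exact le_trans this hd1
    exact (ih hc).trans (Quot.sound hd)

/-- if `e` is a deletable edge of `(G,f)`, then the morphism of persistent
sets `π₀(G∖e, f) → π₀(G,f)` induced by the inclusion of graphs is an isomorphism, i.e.
it is bijective at every grade `r ∈ P`. -/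
theorem pi0_delete_bijective (G : FGrph P) (e : G.E) (he : G.Deletable e) :
    ∀ r : P, Function.Bijective
      ((Quot.map (fun v : {v : G.V // G.fV v ≤ r} => v)
        (fun a b hab => by
          obtain ⟨d, hd1, hd2⟩ := hab
          exact ⟨d.1, hd1, hd2⟩)) :
        (G.delete e).pi0At r → G.pi0At r) := by
  intro r
  constructor
  · -- injective
    intro x y
    refine Quot.induction_on₂ x y ?_
    intro a b hab
    have hEq : Relation.EqvGen
        (fun a b : {v : G.V // G.fV v ≤ r} => G.adjAt r a.1 b.1) a b := by
      exact Quot.eq.mp hab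
    clear hab
    -- show Quot.mk in the deleted graph are equal
    have key : ∀ a b : {v : G.V // G.fV v ≤ r}, G.adjAt r a.1 b.1 →
        Quot.mk (fun a b : {v : (G.delete e).V // (G.delete e).fV v ≤ r} =>
          (G.delete e).adjAt r a.1 b.1) ⟨a.1, a.2⟩ = Quot.mk _ ⟨b.1, b.2⟩ := by
      rintro a b ⟨d, hd1, hd2⟩
      by_cases hde : d = e
      · -- crossing the deleted edge: use deletability
        rw [hde] at hd1 hd2
        have hconn : (G.delete e).connAt r (G.bnd e).1 (G.bnd e).2 :=
          (G.delete e).connAt_mono hd1 he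
        rcases hd2 with hd2 | hd2
        · rw [hd2] at hconn
          simp only at hconn
          exact (G.delete e).connAt_quot r hconn a.2 b.2
        · rw [hd2] at hconn
          simp only at hconn
          exact ((G.delete e).connAt_quot r ((G.delete e).connAt_symm r hconn)
            a.2 b.2)
      · exact Quot.sound ⟨⟨d, hde⟩, hd1, hd2⟩
    induction hEq with
    | rel a b h => exact key a b h
    | refl a => rfl
    | symm a b _ ih => exact ih.symm
    | trans a b c _ _ ih1 ih2 => exact ih1.trans ih2
  · -- surjective
    intro y
    refine Quot.induction_on y ?_
    intro a
    exact ⟨Quot.mk _ ⟨a.1, a.2⟩, rfl⟩
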